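/- Let ψ : ℝ² → ℝ be three times continuously differentiable on an open set Ω ⊆ ℝ², and suppose its gradient ∇ψ is nonvanishing at a point p ∈ Ω. Then at p one has the identity Δ log √((∂ₓψ)² + (∂ᵧψ)²) = ∂ₓ[ (Δψ · ∂ₓψ) / ((∂ₓψ)² + (∂ᵧψ)²) ] + ∂ᵧ[ (Δψ · ∂ᵧψ) / ((∂ₓψ)² + (∂ᵧψ)²) ], where Δ = ∂ₓ² + ∂ᵧ² is the Euclidean Laplacian. -/

import Mathlib

open Real

/-- Partial derivative along the `i`-th coordinate direction in `Fin d → ℝ`. -/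
noncomputable def pd {d : ℕ} (i : Fin d) (f : (Fin d → ℝ) → ℝ) (x : Fin d → ℝ) : ℝ :=
  fderiv ℝ f x (Pi.single i 1)

/-- The flat Laplacian on `Fin d → ℝ`. -/
noncomputable def lap {d : ℕ} (f : (Fin d → ℝ) → ℝ) (x : Fin d → ℝ) : ℝ :=
  ∑ i, pd i (pd i f) x

open Filter Topology

section Helpers

variable {d : ℕ} {f g : (Fin d → ℝ) → ℝ} {x : Fin d → ℝ} {i : Fin d}

lemma pd_congr (h : f =ᶠ[𝓝 x] g) : pd i f x = pd i g x := by
  unfold pd; rw [h.fderiv_eq]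

lemma pd_hasFDerivAt {f' : (Fin d → ℝ) →L[ℝ] ℝ} (h : HasFDerivAt f f' x) :
    pd i f x = f' (Pi.single i 1) := by rw [pd, h.fderiv]

lemma pd_add (hf : DifferentiableAt ℝ f x) (hg : DifferentiableAt ℝ g x) :
    pd i (fun y => f y + g y) x = pd i f x + pd i g x := by
  rw [pd_hasFDerivAt (f := fun y => f y + g y) (hf.hasFDerivAt.add hg.hasFDerivAt)]
  simp [pd]

lemma pd_mul (hf : DifferentiableAt ℝ f x) (hg : DifferentiableAt ℝ g x) :
    pd i (fun y => f y * g y) x = pd i f x * g x + f x * pd i g x := by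
  rw [pd_hasFDerivAt (f := fun y => f y * g y) (hf.hasFDerivAt.mul hg.hasFDerivAt)]
  simp [pd]; ring

lemma pd_sq (hf : DifferentiableAt ℝ f x) :
    pd i (fun y => f y ^ 2) x = 2 * f x * pd i f x := by
  have : (fun y => f y ^ 2) = fun y => f y * f y := by funext y; ring
  rw [this, pd_mul hf hf]; ring

lemma pd_inv (hg : DifferentiableAt ℝ g x) (hx : g x ≠ 0) :
    pd i (fun y => (g y)⁻¹) x = -pd i g x / g x ^ 2 := by
  have h := (hasDerivAt_inv hx).comp_hasFDerivAt x hg.hasFDerivAt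
  have h2 : HasFDerivAt (fun y => (g y)⁻¹) (-(g x ^ 2)⁻¹ • fderiv ℝ g x) x := h
  rw [pd_hasFDerivAt h2]
  simp [pd]
  ring

lemma pd_div (hf : DifferentiableAt ℝ f x) (hg : DifferentiableAt ℝ g x) (hx : g x ≠ 0) :
    pd i (fun y => f y / g y) x = (pd i f x * g x - f x * pd i g x) / g x ^ 2 := by
  have h1 : (fun y => f y / g y) = fun y => f y * (g y)⁻¹ := by
    funext y; rw [div_eq_mul_inv]
  rw [h1, pd_mul (g := fun y => (g y)⁻¹) hf (hg.inv hx), pd_inv hg hx]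
  field_simp
  ring

lemma pd_div_const (hf : DifferentiableAt ℝ f x) (c : ℝ) :
    pd i (fun y => f y / c) x = pd i f x / c := by
  rcases eq_or_ne c 0 with rfl | hc
  · simp only [div_zero]
    have : pd i (fun _ : Fin d → ℝ => (0:ℝ)) x = 0 := by
      rw [pd_hasFDerivAt (hasFDerivAt_const (0:ℝ) x)]; simp
    simpa using this
  · have h1 : (fun y => f y / c) = fun y => f y * c⁻¹ := by
      funext y; rw [div_eq_mul_inv]
    rw [h1, pd_mul hf (differentiableAt_const _)]
    have : pd i (fun _ : Fin d → ℝ => c⁻¹) x = 0 := by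
      rw [pd_hasFDerivAt (hasFDerivAt_const (c⁻¹) x)]; simp
    rw [this]
    field_simp
    ring

lemma pd_log (hf : DifferentiableAt ℝ f x) (hx : f x ≠ 0) :
    pd i (fun y => Real.log (f y)) x = pd i f x / f x := by
  rw [pd_hasFDerivAt (hf.hasFDerivAt.log hx)]
  simp [pd]
  ring

lemma pd_comm (hf : ContDiffAt ℝ 2 f x) (i j : Fin d) :
    pd i (pd j f) x = pd j (pd i f) x := by
  have hd : DifferentiableAt ℝ (fderiv ℝ f) x :=
    (hf.fderiv_right (m := 1) (by norm_num)).differentiableAt (by norm_num)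
  have h : ∀ w v : Fin d → ℝ,
      fderiv ℝ (fun y => fderiv ℝ f y w) x v = fderiv ℝ (fderiv ℝ f) x v w := by
    intro w v
    have hcomp : HasFDerivAt (fun y => fderiv ℝ f y w)
        ((ContinuousLinearMap.apply ℝ ℝ w).comp (fderiv ℝ (fderiv ℝ f) x)) x :=
      (ContinuousLinearMap.apply ℝ ℝ w).hasFDerivAt.comp x hd.hasFDerivAt
    rw [hcomp.fderiv]; rfl
  have hsymm := hf.isSymmSndFDerivAt (by simp [minSmoothness_of_isRCLikeNormedField])
  show fderiv ℝ (pd j f) x (Pi.single i 1) = fderiv ℝ (pd i f) x (Pi.single j 1)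
  have hj : pd j f = fun y => fderiv ℝ f y (Pi.single j 1) := rfl
  have hi : pd i f = fun y => fderiv ℝ f y (Pi.single i 1) := rfl
  rw [hj, hi, h, h, hsymm]

end Helpers

theorem scalar_curvature_identity_2D
    (Ω : Set (Fin 2 → ℝ)) (hΩ : IsOpen Ω)
    (ψ : (Fin 2 → ℝ) → ℝ) (hψ : ContDiffOn ℝ 3 ψ Ω)
    (p : Fin 2 → ℝ) (hp : p ∈ Ω)
    (hgrad : (pd 0 ψ p) ^ 2 + (pd 1 ψ p) ^ 2 ≠ 0) :
    lap (fun x => Real.log (Real.sqrt ((pd 0 ψ x) ^ 2 + (pd 1 ψ x) ^ 2))) p =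
      pd 0 (fun x =>
          (lap ψ x * pd 0 ψ x) / ((pd 0 ψ x) ^ 2 + (pd 1 ψ x) ^ 2)) p +
      pd 1 (fun x =>
          (lap ψ x * pd 1 ψ x) / ((pd 0 ψ x) ^ 2 + (pd 1 ψ x) ^ 2)) p := by
  have hmem : ∀ x ∈ Ω, ContDiffAt ℝ 3 ψ x := fun x hx => hψ.contDiffAt (hΩ.mem_nhds hx)
  have hC2 : ∀ (i : Fin 2), ∀ x ∈ Ω, ContDiffAt ℝ 2 (pd i ψ) x := by
    intro i x hx
    have h1 : ContDiffAt ℝ 2 (fderiv ℝ ψ) x := (hmem x hx).fderiv_right (by norm_num)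
    exact h1.clm_apply contDiffAt_const
  have hC1 : ∀ (i j : Fin 2), ∀ x ∈ Ω, ContDiffAt ℝ 1 (pd j (pd i ψ)) x := by
    intro i j x hx
    have h1 : ContDiffAt ℝ 1 (fderiv ℝ (pd i ψ)) x := (hC2 i x hx).fderiv_right (by norm_num)
    exact h1.clm_apply contDiffAt_const
  have du : ∀ (i : Fin 2), ∀ x ∈ Ω, DifferentiableAt ℝ (pd i ψ) x :=
    fun i x hx => (hC2 i x hx).differentiableAt (by norm_num)
  have du2 : ∀ (i j : Fin 2), ∀ x ∈ Ω, DifferentiableAt ℝ (pd j (pd i ψ)) x :=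
    fun i j x hx => (hC1 i j x hx).differentiableAt (by norm_num)
  have dq : ∀ x ∈ Ω, DifferentiableAt ℝ (fun y => pd 0 ψ y ^ 2 + pd 1 ψ y ^ 2) x :=
    fun x hx => ((du 0 x hx).pow 2).add ((du 1 x hx).pow 2)
  have hU : ∀ᶠ x in 𝓝 p, x ∈ Ω ∧ (pd 0 ψ x ^ 2 + pd 1 ψ x ^ 2) ≠ 0 :=
    (hΩ.eventually_mem hp).and ((dq p hp).continuousAt.eventually_ne hgrad)
  -- rewrite log ∘ sqrt as log / 2
  have hL : (fun x => Real.log (Real.sqrt ((pd 0 ψ x) ^ 2 + (pd 1 ψ x) ^ 2)))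
      = fun x => Real.log ((pd 0 ψ x) ^ 2 + (pd 1 ψ x) ^ 2) / 2 := by
    funext x
    exact Real.log_sqrt (by positivity)
  rw [hL]
  simp only [lap, Fin.sum_univ_two]
  -- first derivative of LHS function agrees with G i near p
  have hGi : ∀ i : Fin 2,
      (pd i (fun y => Real.log ((pd 0 ψ y) ^ 2 + (pd 1 ψ y) ^ 2) / 2))
        =ᶠ[𝓝 p] fun x => (pd 0 ψ x * pd i (pd 0 ψ) x + pd 1 ψ x * pd i (pd 1 ψ) x)
            / ((pd 0 ψ x) ^ 2 + (pd 1 ψ x) ^ 2) := by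
    intro i
    filter_upwards [hU] with x hx
    obtain ⟨hxΩ, hqx⟩ := hx
    show pd i (fun y => Real.log ((pd 0 ψ y) ^ 2 + (pd 1 ψ y) ^ 2) / 2) x = _
    rw [pd_div_const ((dq x hxΩ).log hqx) 2, pd_log (dq x hxΩ) hqx,
      pd_add (f := fun y => pd 0 ψ y ^ 2) (g := fun y => pd 1 ψ y ^ 2) ((du 0 x hxΩ).pow 2) ((du 1 x hxΩ).pow 2), pd_sq (du 0 x hxΩ), pd_sq (du 1 x hxΩ)]
    field_simp
  have hLHS : ∀ i : Fin 2,
      pd i (pd i (fun y => Real.log ((pd 0 ψ y) ^ 2 + (pd 1 ψ y) ^ 2) / 2)) p =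
        ((pd i (pd 0 ψ) p * pd i (pd 0 ψ) p + pd 0 ψ p * pd i (pd i (pd 0 ψ)) p
          + (pd i (pd 1 ψ) p * pd i (pd 1 ψ) p + pd 1 ψ p * pd i (pd i (pd 1 ψ)) p))
            * ((pd 0 ψ p) ^ 2 + (pd 1 ψ p) ^ 2)
          - (pd 0 ψ p * pd i (pd 0 ψ) p + pd 1 ψ p * pd i (pd 1 ψ) p)
            * (2 * pd 0 ψ p * pd i (pd 0 ψ) p + 2 * pd 1 ψ p * pd i (pd 1 ψ) p))
          / ((pd 0 ψ p) ^ 2 + (pd 1 ψ p) ^ 2) ^ 2 := by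
    intro i
    rw [pd_congr (hGi i)]
    have dN : DifferentiableAt ℝ
        (fun x => pd 0 ψ x * pd i (pd 0 ψ) x + pd 1 ψ x * pd i (pd 1 ψ) x) p :=
      ((du 0 p hp).mul (du2 0 i p hp)).add ((du 1 p hp).mul (du2 1 i p hp))
    rw [pd_div dN (dq p hp) hgrad,
      pd_add (f := fun y => pd 0 ψ y * pd i (pd 0 ψ) y) (g := fun y => pd 1 ψ y * pd i (pd 1 ψ) y) ((du 0 p hp).mul (du2 0 i p hp)) ((du 1 p hp).mul (du2 1 i p hp)),
      pd_mul (du 0 p hp) (du2 0 i p hp), pd_mul (du 1 p hp) (du2 1 i p hp),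
      pd_add (f := fun y => pd 0 ψ y ^ 2) (g := fun y => pd 1 ψ y ^ 2) ((du 0 p hp).pow 2) ((du 1 p hp).pow 2), pd_sq (du 0 p hp), pd_sq (du 1 p hp)]
  have hRHS : ∀ i : Fin 2,
      pd i (fun x => (pd 0 (pd 0 ψ) x + pd 1 (pd 1 ψ) x) * pd i ψ x
          / ((pd 0 ψ x) ^ 2 + (pd 1 ψ x) ^ 2)) p =
        (((pd i (pd 0 (pd 0 ψ)) p + pd i (pd 1 (pd 1 ψ)) p) * pd i ψ p
            + (pd 0 (pd 0 ψ) p + pd 1 (pd 1 ψ) p) * pd i (pd i ψ) p)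
            * ((pd 0 ψ p) ^ 2 + (pd 1 ψ p) ^ 2)
          - (pd 0 (pd 0 ψ) p + pd 1 (pd 1 ψ) p) * pd i ψ p
            * (2 * pd 0 ψ p * pd i (pd 0 ψ) p + 2 * pd 1 ψ p * pd i (pd 1 ψ) p))
          / ((pd 0 ψ p) ^ 2 + (pd 1 ψ p) ^ 2) ^ 2 := by
    intro i
    have dN : DifferentiableAt ℝ
        (fun x => (pd 0 (pd 0 ψ) x + pd 1 (pd 1 ψ) x) * pd i ψ x) p :=
      ((du2 0 0 p hp).add (du2 1 1 p hp)).mul (du i p hp)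
    rw [pd_div dN (dq p hp) hgrad,
      pd_mul (f := fun y => pd 0 (pd 0 ψ) y + pd 1 (pd 1 ψ) y) ((du2 0 0 p hp).add (du2 1 1 p hp)) (du i p hp),
      pd_add (du2 0 0 p hp) (du2 1 1 p hp),
      pd_add (f := fun y => pd 0 ψ y ^ 2) (g := fun y => pd 1 ψ y ^ 2) ((du 0 p hp).pow 2) ((du 1 p hp).pow 2), pd_sq (du 0 p hp), pd_sq (du 1 p hp)]
  rw [hLHS 0, hLHS 1, hRHS 0, hRHS 1]
  -- Clairaut symmetries
  have hswap : (pd 0 (pd 1 ψ)) =ᶠ[𝓝 p] (pd 1 (pd 0 ψ)) := by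
    filter_upwards [hΩ.eventually_mem hp] with x hx
    exact pd_comm ((hmem x hx).of_le (by norm_num)) 0 1
  have c2 : pd 0 (pd 1 ψ) p = pd 1 (pd 0 ψ) p := hswap.self_of_nhds
  have e2 : pd 0 (pd 0 (pd 1 ψ)) p = pd 1 (pd 0 (pd 0 ψ)) p := by
    rw [pd_congr (i := 0) hswap]
    exact pd_comm (hC2 0 p hp) 0 1
  have e3 : pd 0 (pd 1 (pd 1 ψ)) p = pd 1 (pd 1 (pd 0 ψ)) p := by
    rw [pd_comm (hC2 1 p hp) 0 1]
    exact pd_congr (i := 1) hswap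
  rw [c2, e2, e3]
  field_simp
  ring
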